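/- Let s ≥ 1, let μ : Fin s → ℝ and σ : Fin s → ℝ with σ_j > 0 for all j, let P be the product measure on Fin s → ℝ whose j-th factor is the real Gaussian measure with mean μ_j and variance σ_j², and let J ⊆ Fin s be nonempty. Then the pushforward of P under the map z ↦ max_{j∈J} z_j equals Lebesgue measure on ℝ with density g, where g(v) = ∑_{j∈J} (1/σ_j) φ((v − μ_j)/σ_j) ∏_{ℓ∈J, ℓ≠j} Φ((v − μ_ℓ)/σ_ℓ), with Φ and φ the cumulative distribution function and density of the standard real Gaussian. -/

import Mathlib

open MeasureTheory ProbabilityTheory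
open Set Filter Topology NNReal

/-- Standard Gaussian density `φ`. -/
noncomputable def stdGaussPDF (u : ℝ) : ℝ :=
  (Real.sqrt (2 * Real.pi))⁻¹ * Real.exp (-(u ^ 2) / 2)

/-- Standard Gaussian cumulative distribution function `Φ`. -/
noncomputable def stdGaussCDF (t : ℝ) : ℝ :=
  ∫ u in Set.Iic t, stdGaussPDF u

lemma stdGaussPDF_eq (x : ℝ) : stdGaussPDF x = gaussianPDFReal 0 1 x := by
  simp [stdGaussPDF, gaussianPDFReal]


lemma stdGaussPDF_nonneg (x : ℝ) : 0 ≤ stdGaussPDF x := by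
  unfold stdGaussPDF; positivity

lemma continuous_stdGaussPDF : Continuous stdGaussPDF := by
  unfold stdGaussPDF; fun_prop

lemma integrable_stdGaussPDF : Integrable stdGaussPDF := by
  have : stdGaussPDF = gaussianPDFReal 0 1 := funext stdGaussPDF_eq
  rw [this]; exact integrable_gaussianPDFReal 0 1

lemma ofReal_stdGaussCDF (u : ℝ) :
    ENNReal.ofReal (stdGaussCDF u) = gaussianReal 0 1 (Iic u) := by
  rw [gaussianReal_apply_eq_integral _ one_ne_zero]
  unfold stdGaussCDF
  congr 1
  exact setIntegral_congr_fun measurableSet_Iic fun x _ => stdGaussPDF_eq x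

lemma stdGaussCDF_nonneg (u : ℝ) : 0 ≤ stdGaussCDF u :=
  integral_nonneg fun x => stdGaussPDF_nonneg x

lemma stdGaussCDF_eq_cdf (u : ℝ) : stdGaussCDF u = cdf (gaussianReal 0 1) u := by
  rw [cdf_eq_real, measureReal_def, ← ofReal_stdGaussCDF, ENNReal.toReal_ofReal (stdGaussCDF_nonneg u)]

lemma stdGaussCDF_le_one (u : ℝ) : stdGaussCDF u ≤ 1 := by
  rw [stdGaussCDF_eq_cdf]; exact cdf_le_one _ _

lemma hasDerivAt_stdGaussCDF (t : ℝ) : HasDerivAt stdGaussCDF (stdGaussPDF t) t := by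
  have key : stdGaussCDF = fun u => stdGaussCDF 0 + ∫ x in (0:ℝ)..u, stdGaussPDF x := by
    funext u
    rw [← intervalIntegral.integral_Iic_sub_Iic integrable_stdGaussPDF.integrableOn
      integrable_stdGaussPDF.integrableOn]
    unfold stdGaussCDF; ring
  rw [key]
  exact (intervalIntegral.integral_hasDerivAt_right
    (integrable_stdGaussPDF.intervalIntegrable)
    continuous_stdGaussPDF.stronglyMeasurable.stronglyMeasurableAtFilter
    continuous_stdGaussPDF.continuousAt).const_add _

lemma continuous_stdGaussCDF : Continuous stdGaussCDF :=
  continuous_iff_continuousAt.mpr fun t => (hasDerivAt_stdGaussCDF t).continuousAt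

lemma tendsto_stdGaussCDF_atBot : Tendsto stdGaussCDF atBot (𝓝 0) := by
  have : stdGaussCDF = cdf (gaussianReal 0 1) := funext stdGaussCDF_eq_cdf
  rw [this]; exact tendsto_cdf_atBot _

lemma scaled_pdf_eq (m a v : ℝ) (ha : 0 < a) :
    (1 / a) * stdGaussPDF ((v - m) / a) = gaussianPDFReal m ((a ^ 2).toNNReal) v := by
  unfold stdGaussPDF gaussianPDFReal
  have h1 : ((Real.toNNReal (a ^ 2) : ℝ≥0) : ℝ) = a ^ 2 := Real.coe_toNNReal _ (sq_nonneg a)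
  rw [h1]
  have h2 : Real.sqrt (2 * Real.pi * a ^ 2) = Real.sqrt (2 * Real.pi) * a := by
    rw [Real.sqrt_mul (by positivity), Real.sqrt_sq ha.le]
  rw [h2]
  have h3 : -(((v - m) / a) ^ 2) / 2 = -(v - m) ^ 2 / (2 * a ^ 2) := by
    rw [div_pow]; rw [neg_div, neg_div, div_div, mul_comm (a ^ 2) 2]
  rw [h3, mul_inv]
  ring

lemma gauss_Iic (m a t : ℝ) (ha : 0 < a) :
    gaussianReal m ((a ^ 2).toNNReal) (Iic t)
      = ENNReal.ofReal (stdGaussCDF ((t - m) / a)) := by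
  have hmap : gaussianReal m ((a ^ 2).toNNReal)
      = Measure.map (fun x => a * x + m) (gaussianReal 0 1) := by
    rw [show (fun x : ℝ => a * x + m) = (fun x => x + m) ∘ (fun x => a * x) from rfl,
      ← Measure.map_map (by fun_prop) (by fun_prop), gaussianReal_map_const_mul,
      gaussianReal_map_add_const]
    congr 1
    · simp
    · ext
      push_cast
      simp [Real.coe_toNNReal _ (sq_nonneg a)]
  rw [hmap, Measure.map_apply (by fun_prop) measurableSet_Iic]
  have hpre : (fun x => a * x + m) ⁻¹' Iic t = Iic ((t - m) / a) := by
    ext x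
    simp only [mem_preimage, mem_Iic, le_div_iff₀ ha]
    constructor <;> intro h <;> linarith
  rw [hpre, ← ofReal_stdGaussCDF]

/-- Under the product Gaussian measure, the law of `max_{j∈J} z j` is Lebesgue
measure with density `g(v) = ∑_{j∈J} (1/σ j) φ((v − μ j)/σ j) ∏_{ℓ∈J, ℓ≠j} Φ((v − μ ℓ)/σ ℓ)`. -/
theorem law_of_max_gaussian {s : ℕ} (hs : 1 ≤ s) (μ σ : Fin s → ℝ) (hσ : ∀ j, 0 < σ j)
    (J : Finset (Fin s)) (hJne : J.Nonempty) :
    Measure.map (fun z : Fin s → ℝ => J.sup' hJne z)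
        (Measure.pi fun i => gaussianReal (μ i) (Real.toNNReal ((σ i) ^ 2)))
      =
    volume.withDensity (fun v : ℝ => ENNReal.ofReal
      (∑ j ∈ J, (1 / σ j) * stdGaussPDF ((v - μ j) / σ j) *
        ∏ ℓ ∈ J.erase j, stdGaussCDF ((v - μ ℓ) / σ ℓ))) := by
  set g : ℝ → ℝ := fun v => ∑ j ∈ J, (1 / σ j) * stdGaussPDF ((v - μ j) / σ j) *
        ∏ ℓ ∈ J.erase j, stdGaussCDF ((v - μ ℓ) / σ ℓ) with hg_def
  set F : ℝ → ℝ := fun v => ∏ j ∈ J, stdGaussCDF ((v - μ j) / σ j) with hF_def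
  show Measure.map _ _ = volume.withDensity (fun v : ℝ => ENNReal.ofReal (g v))
  have hmeasf : Measurable (fun z : Fin s → ℝ => J.sup' hJne z) := by
    have h := Finset.measurable_sup' hJne (f := fun (j : Fin s) (z : Fin s → ℝ) => z j)
      fun j _ => measurable_pi_apply j
    have heq : (J.sup' hJne fun (j : Fin s) (z : Fin s → ℝ) => z j)
        = fun z : Fin s → ℝ => J.sup' hJne z :=
      funext fun z => Finset.sup'_apply hJne _ z
    rwa [heq] at h
  have hF' : ∀ v, HasDerivAt F (g v) v := by
    intro v
    have h := HasDerivAt.fun_finsetProd (u := J)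
      (f := fun j u => stdGaussCDF ((u - μ j) / σ j))
      (f' := fun j => (1 / σ j) * stdGaussPDF ((v - μ j) / σ j)) (x := v) ?_
    · refine h.congr_deriv ?_
      refine Finset.sum_congr rfl fun j hj => ?_
      simp only [smul_eq_mul]
      ring
    · intro j hj
      have inner : HasDerivAt (fun u => (u - μ j) / σ j) (1 / σ j) v := by
        simpa using ((hasDerivAt_id v).sub_const (μ j)).div_const (σ j)
      have := (hasDerivAt_stdGaussCDF ((v - μ j) / σ j)).comp v inner
      simpa [mul_comm, Function.comp_def] using this
  have hg_nonneg : ∀ v, 0 ≤ g v := by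
    intro v
    refine Finset.sum_nonneg fun j hj => ?_
    refine mul_nonneg (mul_nonneg (one_div_nonneg.mpr (hσ j).le) (stdGaussPDF_nonneg _)) ?_
    exact Finset.prod_nonneg fun ℓ _ => stdGaussCDF_nonneg _
  have hg_cont : Continuous g := by
    refine continuous_finset_sum _ fun j _ => ?_
    exact ((continuous_const.mul (continuous_stdGaussPDF.comp
        ((continuous_id.sub continuous_const).div_const _))).mul
      (continuous_finset_prod _ fun ℓ _ => continuous_stdGaussCDF.comp
        ((continuous_id.sub continuous_const).div_const _)))
  have hbound_int : Integrable (fun v => ∑ j ∈ J, gaussianPDFReal (μ j) ((σ j ^ 2)).toNNReal v) :=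
    integrable_finset_sum _ fun j _ => integrable_gaussianPDFReal _ _
  have hg_le : ∀ v, g v ≤ ∑ j ∈ J, gaussianPDFReal (μ j) ((σ j ^ 2)).toNNReal v := by
    intro v
    refine Finset.sum_le_sum fun j _ => ?_
    rw [← scaled_pdf_eq (μ j) (σ j) v (hσ j)]
    calc (1 / σ j) * stdGaussPDF ((v - μ j) / σ j)
          * ∏ ℓ ∈ J.erase j, stdGaussCDF ((v - μ ℓ) / σ ℓ)
        ≤ (1 / σ j) * stdGaussPDF ((v - μ j) / σ j) * 1 := by
          refine mul_le_mul_of_nonneg_left ?_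
            (mul_nonneg (one_div_nonneg.mpr (hσ j).le) (stdGaussPDF_nonneg _))
          exact Finset.prod_le_one (fun ℓ _ => stdGaussCDF_nonneg _)
            (fun ℓ _ => stdGaussCDF_le_one _)
      _ = (1 / σ j) * stdGaussPDF ((v - μ j) / σ j) := mul_one _
  have hg_int : Integrable g :=
    hbound_int.mono' hg_cont.aestronglyMeasurable
      (ae_of_all _ fun v => by rw [Real.norm_of_nonneg (hg_nonneg v)]; exact hg_le v)
  have hFbot : Tendsto F atBot (𝓝 0) := by
    obtain ⟨j0, hj0⟩ := hJne
    have hb : ∀ v, F v ≤ stdGaussCDF ((v - μ j0) / σ j0) := by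
      intro v
      show (∏ j ∈ J, stdGaussCDF ((v - μ j) / σ j)) ≤ _
      rw [← Finset.mul_prod_erase J _ hj0]
      exact mul_le_of_le_one_right (stdGaussCDF_nonneg _)
        (Finset.prod_le_one (fun ℓ _ => stdGaussCDF_nonneg _) fun ℓ _ => stdGaussCDF_le_one _)
    have hF0 : ∀ v, 0 ≤ F v := fun v => Finset.prod_nonneg fun ℓ _ => stdGaussCDF_nonneg _
    have htind : Tendsto (fun v : ℝ => (v - μ j0) / σ j0) atBot atBot := by
      refine Tendsto.atBot_div_const (hσ j0) ?_
      simpa [sub_eq_add_neg] using tendsto_atBot_add_const_right atBot (-μ j0) tendsto_id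
    exact squeeze_zero hF0 hb (tendsto_stdGaussCDF_atBot.comp htind)
  have key : ∀ t, ∫ v in Iic t, g v = F t := by
    intro t
    rw [integral_Iic_of_hasDerivAt_of_tendsto' (fun x _ => hF' x) hg_int.integrableOn hFbot,
      sub_zero]
  have : IsProbabilityMeasure (Measure.map (fun z : Fin s → ℝ => J.sup' hJne z)
      (Measure.pi fun i => gaussianReal (μ i) ((σ i ^ 2)).toNNReal)) :=
    Measure.isProbabilityMeasure_map hmeasf.aemeasurable
  refine Measure.ext_of_Iic _ _ fun t => ?_
  rw [Measure.map_apply hmeasf measurableSet_Iic]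
  have hpre : (fun z : Fin s → ℝ => J.sup' hJne z) ⁻¹' Iic t
      = Set.pi Set.univ (fun j => if j ∈ J then Iic t else Set.univ) := by
    ext z
    simp only [mem_preimage, mem_Iic, Finset.sup'_le_iff, Set.mem_univ_pi]
    constructor
    · intro h i
      split_ifs with hi
      · exact h i hi
      · trivial
    · intro h i hi
      have := h i
      rwa [if_pos hi] at this
  rw [hpre, Measure.pi_pi]
  have hprod : ∀ i : Fin s, (gaussianReal (μ i) ((σ i ^ 2)).toNNReal)
      (if i ∈ J then Iic t else Set.univ)
      = if i ∈ J then ENNReal.ofReal (stdGaussCDF ((t - μ i) / σ i)) else 1 := by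
    intro i
    split_ifs with hi
    · exact gauss_Iic (μ i) (σ i) t (hσ i)
    · simp
  simp_rw [hprod]
  rw [Finset.prod_ite_mem, Finset.univ_inter,
    ← ENNReal.ofReal_prod_of_nonneg (fun i _ => stdGaussCDF_nonneg _),
    withDensity_apply _ measurableSet_Iic,
    ← ofReal_integral_eq_lintegral_ofReal hg_int.integrableOn
      (ae_of_all _ fun v => hg_nonneg v), key t]
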